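/- For constants a, b > 0 and c > 0, the function h(t) = t·√(a·2^{c/t} + b·(2^{c/t})²) is convex on t ∈ (0, ∞). -/

import Mathlib

/-- Two-term Hölder inequality for positive reals. -/
lemma holder2_aux {u₁ u₂ v₁ v₂ p q : ℝ} (hu₁ : 0 < u₁) (hu₂ : 0 < u₂)
    (hv₁ : 0 < v₁) (hv₂ : 0 < v₂) (hp : 0 ≤ p) (hq : 0 ≤ q) (hpq : p + q = 1) :
    u₁ ^ p * v₁ ^ q + u₂ ^ p * v₂ ^ q ≤ (u₁ + u₂) ^ p * (v₁ + v₂) ^ q := by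
  have hU : 0 < u₁ + u₂ := by linarith
  have hV : 0 < v₁ + v₂ := by linarith
  have h1 : (u₁ / (u₁ + u₂)) ^ p * (v₁ / (v₁ + v₂)) ^ q
      ≤ p * (u₁ / (u₁ + u₂)) + q * (v₁ / (v₁ + v₂)) :=
    Real.geom_mean_le_arith_mean2_weighted hp hq (by positivity) (by positivity) hpq
  have h2 : (u₂ / (u₁ + u₂)) ^ p * (v₂ / (v₁ + v₂)) ^ q
      ≤ p * (u₂ / (u₁ + u₂)) + q * (v₂ / (v₁ + v₂)) :=
    Real.geom_mean_le_arith_mean2_weighted hp hq (by positivity) (by positivity) hpq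
  have e1 : ∀ w x : ℝ, 0 < w → 0 < x →
      (w / (u₁ + u₂)) ^ p * (x / (v₁ + v₂)) ^ q
        = (w ^ p * x ^ q) / ((u₁ + u₂) ^ p * (v₁ + v₂) ^ q) := by
    intro w x hw hx
    rw [Real.div_rpow hw.le hU.le, Real.div_rpow hx.le hV.le]
    ring
  rw [e1 _ _ hu₁ hv₁] at h1
  rw [e1 _ _ hu₂ hv₂] at h2
  have hD : 0 < (u₁ + u₂) ^ p * (v₁ + v₂) ^ q := by positivity
  have hsum : (u₁ ^ p * v₁ ^ q + u₂ ^ p * v₂ ^ q) / ((u₁ + u₂) ^ p * (v₁ + v₂) ^ q) ≤ 1 := by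
    rw [add_div]
    calc u₁ ^ p * v₁ ^ q / ((u₁ + u₂) ^ p * (v₁ + v₂) ^ q)
          + u₂ ^ p * v₂ ^ q / ((u₁ + u₂) ^ p * (v₁ + v₂) ^ q)
        ≤ (p * (u₁ / (u₁ + u₂)) + q * (v₁ / (v₁ + v₂)))
          + (p * (u₂ / (u₁ + u₂)) + q * (v₂ / (v₁ + v₂))) := by linarith
      _ = p * ((u₁ + u₂) / (u₁ + u₂)) + q * ((v₁ + v₂) / (v₁ + v₂)) := by ring
      _ = 1 := by rw [div_self hU.ne', div_self hV.ne']; linarith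
  calc u₁ ^ p * v₁ ^ q + u₂ ^ p * v₂ ^ q
      = ((u₁ ^ p * v₁ ^ q + u₂ ^ p * v₂ ^ q) / ((u₁ + u₂) ^ p * (v₁ + v₂) ^ q))
          * ((u₁ + u₂) ^ p * (v₁ + v₂) ^ q) := by field_simp
    _ ≤ 1 * ((u₁ + u₂) ^ p * (v₁ + v₂) ^ q) := by
        exact mul_le_mul_of_nonneg_right hsum hD.le
    _ = (u₁ + u₂) ^ p * (v₁ + v₂) ^ q := one_mul _

/-- The inner function `x ↦ √(a·2^x + b·(2^x)²)` is convex on ℝ. -/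
lemma sqrt_inner_convex {a b : ℝ} (ha : 0 < a) (hb : 0 < b) :
    ConvexOn ℝ Set.univ
      (fun x : ℝ => Real.sqrt (a * (2 : ℝ) ^ x + b * ((2 : ℝ) ^ x) ^ 2)) := by
  have h2 : (0 : ℝ) < 2 := by norm_num
  have hSpos : ∀ z : ℝ, 0 < a * (2 : ℝ) ^ z + b * ((2 : ℝ) ^ z) ^ 2 := by
    intro z
    have := Real.rpow_pos_of_pos h2 z
    positivity
  refine ⟨convex_univ, ?_⟩
  intro x _ y _ p q hp hq hpq
  simp only [smul_eq_mul]
  have hSxpos := hSpos x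
  have hSypos := hSpos y
  have e2 : ∀ z : ℝ, ((2 : ℝ) ^ z) ^ 2 = (2 : ℝ) ^ (2 * z) := by
    intro z
    rw [two_mul, Real.rpow_add h2]
    ring
  have eA : a * (2 : ℝ) ^ (p * x + q * y)
      = (a * (2 : ℝ) ^ x) ^ p * (a * (2 : ℝ) ^ y) ^ q := by
    rw [Real.mul_rpow ha.le (Real.rpow_pos_of_pos h2 x).le,
      Real.mul_rpow ha.le (Real.rpow_pos_of_pos h2 y).le,
      ← Real.rpow_mul h2.le x p, ← Real.rpow_mul h2.le y q,
      show a ^ p * (2:ℝ) ^ (x * p) * (a ^ q * (2:ℝ) ^ (y * q))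
        = a ^ p * a ^ q * ((2:ℝ) ^ (x * p) * (2:ℝ) ^ (y * q)) from by ring,
      ← Real.rpow_add ha, hpq, Real.rpow_one, ← Real.rpow_add h2,
      show x * p + y * q = p * x + q * y from by ring]
  have eB : b * (2 : ℝ) ^ (2 * (p * x + q * y))
      = (b * (2 : ℝ) ^ (2 * x)) ^ p * (b * (2 : ℝ) ^ (2 * y)) ^ q := by
    rw [Real.mul_rpow hb.le (Real.rpow_pos_of_pos h2 _).le,
      Real.mul_rpow hb.le (Real.rpow_pos_of_pos h2 _).le,
      ← Real.rpow_mul h2.le (2 * x) p, ← Real.rpow_mul h2.le (2 * y) q,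
      show b ^ p * (2:ℝ) ^ (2 * x * p) * (b ^ q * (2:ℝ) ^ (2 * y * q))
        = b ^ p * b ^ q * ((2:ℝ) ^ (2 * x * p) * (2:ℝ) ^ (2 * y * q)) from by ring,
      ← Real.rpow_add hb, hpq, Real.rpow_one, ← Real.rpow_add h2,
      show 2 * x * p + 2 * y * q = 2 * (p * x + q * y) from by ring]
  have hstep : a * (2 : ℝ) ^ (p * x + q * y) + b * ((2 : ℝ) ^ (p * x + q * y)) ^ 2
      ≤ (a * (2 : ℝ) ^ x + b * ((2 : ℝ) ^ x) ^ 2) ^ p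
        * (a * (2 : ℝ) ^ y + b * ((2 : ℝ) ^ y) ^ 2) ^ q := by
    simp only [e2]
    rw [eA, eB]
    exact holder2_aux (mul_pos ha (Real.rpow_pos_of_pos h2 x))
      (mul_pos hb (Real.rpow_pos_of_pos h2 (2 * x)))
      (mul_pos ha (Real.rpow_pos_of_pos h2 y))
      (mul_pos hb (Real.rpow_pos_of_pos h2 (2 * y))) hp hq hpq
  calc Real.sqrt (a * (2:ℝ) ^ (p * x + q * y) + b * ((2:ℝ) ^ (p * x + q * y)) ^ 2)
      ≤ Real.sqrt ((a * (2:ℝ) ^ x + b * ((2:ℝ) ^ x) ^ 2) ^ p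
          * (a * (2:ℝ) ^ y + b * ((2:ℝ) ^ y) ^ 2) ^ q) := Real.sqrt_le_sqrt hstep
    _ = (Real.sqrt (a * (2:ℝ) ^ x + b * ((2:ℝ) ^ x) ^ 2)) ^ p
          * (Real.sqrt (a * (2:ℝ) ^ y + b * ((2:ℝ) ^ y) ^ 2)) ^ q := by
        rw [Real.sqrt_eq_rpow, Real.sqrt_eq_rpow, Real.sqrt_eq_rpow,
          Real.mul_rpow (Real.rpow_nonneg hSxpos.le p) (Real.rpow_nonneg hSypos.le q),
          ← Real.rpow_mul hSxpos.le, ← Real.rpow_mul hSypos.le,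
          ← Real.rpow_mul hSxpos.le, ← Real.rpow_mul hSypos.le]
        ring_nf
    _ ≤ p * Real.sqrt (a * (2:ℝ) ^ x + b * ((2:ℝ) ^ x) ^ 2)
          + q * Real.sqrt (a * (2:ℝ) ^ y + b * ((2:ℝ) ^ y) ^ 2) :=
        Real.geom_mean_le_arith_mean2_weighted hp hq (Real.sqrt_nonneg _)
          (Real.sqrt_nonneg _) hpq

theorem stmt_2 (a b c : ℝ) (ha : 0 < a) (hb : 0 < b) (hc : 0 < c) :
    ConvexOn ℝ (Set.Ioi (0 : ℝ))
      (fun t : ℝ => t * Real.sqrt (a * (2 : ℝ) ^ (c / t) + b * ((2 : ℝ) ^ (c / t)) ^ 2)) := by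
  have hf := sqrt_inner_convex ha hb
  refine ⟨convex_Ioi 0, ?_⟩
  intro t ht s hs p q hp hq hpq
  simp only [smul_eq_mul] at *
  have ht' : (0:ℝ) < t := ht
  have hs' : (0:ℝ) < s := hs
  have hT : 0 < p * t + q * s := by
    rcases hp.eq_or_lt with h | h
    · have : q = 1 := by linarith
      rw [← h, this]; simpa using hs'
    · have h1 : 0 < p * t := mul_pos h ht'
      have h2 : 0 ≤ q * s := mul_nonneg hq hs'.le
      linarith
  set T := p * t + q * s with hTdef
  have hp' : 0 ≤ p * t / T := by positivity
  have hq' : 0 ≤ q * s / T := by positivity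
  have hsum : p * t / T + q * s / T = 1 := by
    field_simp
    exact hTdef.symm
  have hcomb : (p * t / T) * (c / t) + (q * s / T) * (c / s) = c / T := by
    have h1 : p * t / T * (c / t) = p * c / T := by
      rw [div_mul_div_comm, show p * t * c = p * c * t from by ring,
        mul_div_mul_right _ _ ht'.ne']
    have h2 : q * s / T * (c / s) = q * c / T := by
      rw [div_mul_div_comm, show q * s * c = q * c * s from by ring,
        mul_div_mul_right _ _ hs'.ne']
    rw [h1, h2, ← add_div, show p * c + q * c = c from by
      rw [← add_mul, hpq, one_mul]]
  have hkey := hf.2 (Set.mem_univ (c / t)) (Set.mem_univ (c / s)) hp' hq' hsum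
  simp only [smul_eq_mul] at hkey
  rw [hcomb] at hkey
  have hmul := mul_le_mul_of_nonneg_left hkey hT.le
  calc T * Real.sqrt (a * (2:ℝ) ^ (c / T) + b * ((2:ℝ) ^ (c / T)) ^ 2)
      ≤ T * (p * t / T * Real.sqrt (a * (2:ℝ) ^ (c / t) + b * ((2:ℝ) ^ (c / t)) ^ 2)
          + q * s / T * Real.sqrt (a * (2:ℝ) ^ (c / s) + b * ((2:ℝ) ^ (c / s)) ^ 2)) := hmul
    _ = (p * t / T * T) * Real.sqrt (a * (2:ℝ) ^ (c / t) + b * ((2:ℝ) ^ (c / t)) ^ 2)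
          + (q * s / T * T) * Real.sqrt (a * (2:ℝ) ^ (c / s) + b * ((2:ℝ) ^ (c / s)) ^ 2) := by
        ring
    _ = p * (t * Real.sqrt (a * (2:ℝ) ^ (c / t) + b * ((2:ℝ) ^ (c / t)) ^ 2))
          + q * (s * Real.sqrt (a * (2:ℝ) ^ (c / s) + b * ((2:ℝ) ^ (c / s)) ^ 2)) := by
        rw [div_mul_cancel₀ _ hT.ne', div_mul_cancel₀ _ hT.ne']
        ring
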